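/- Let d := max over m ∈ M of the number of buses o ∈ O with adj o m, and assume d ≥ 1. If for some integer k ≥ 1 the set O can be partitioned into k pairwise disjoint subsets with union O, each admitting an injective map into M × Fin 2 whose first component is adjacent (i.e., for each subset O̅ there is an injective h : O̅ → M × Fin 2 with adj o ((h o).1) for all o ∈ O̅), then O can be partitioned into ⌈d/2⌉ such subsets. (In words: with phasor data, a probing setup that is not successful for T = δ_M − 1 probing actions, where δ_M − 1 = d, cannot turn successful for any larger number of probing actions.) -/
import Mathlib


/-- Lemma 3 (bound on useful probing actions, phasor data): let `d` be the
maximum, over metered buses `m ∈ M`, of the number of non-metered buses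
adjacent to `m`, and assume `d ≥ 1`. If `O` can be partitioned into `k`
subsets each perfectly matched to `M ∪ M′` (i.e. injectively into `M × Fin 2`
along adjacency), then `O` can already be partitioned into `⌈d/2⌉` such
subsets: a probing setup with phasor data cannot turn successful beyond
`T_max = d = δ_M − 1` probing actions. -/
theorem phasor_probing_Tmax
    {M O : Type*} [Fintype M] [Fintype O]
    (adj : (M ⊕ O) → (M ⊕ O) → Prop) [DecidableRel adj]
    (hsymm : ∀ n m, adj n m → adj m n)
    (hirr : ∀ n, ¬ adj n n)
    (d : ℕ)
    (hd : d = Finset.univ.sup fun m : M =>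
      (Finset.univ.filter fun o : O => adj (Sum.inr o) (Sum.inl m)).card)
    (hd1 : 1 ≤ d)
    (k : ℕ) (hk : 1 ≤ k)
    (P : Fin k → Set O)
    (hdisj : ∀ i j, i ≠ j → Disjoint (P i) (P j))
    (hcover : (⋃ i, P i) = Set.univ)
    (hmatch : ∀ j, ∃ h : P j → M × Fin 2, Function.Injective h ∧
        ∀ o : P j, adj (Sum.inr (o : O)) (Sum.inl (h o).1)) :
    ∃ Q : Fin ((d + 1) / 2) → Set O,
      (∀ i j, i ≠ j → Disjoint (Q i) (Q j)) ∧
      (⋃ i, Q i) = Set.univ ∧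
      ∀ j, ∃ h : Q j → M × Fin 2, Function.Injective h ∧
        ∀ o : Q j, adj (Sum.inr (o : O)) (Sum.inl (h o).1) := by
  classical
  have hadjO : ∀ o : O, ∃ m : M, adj (Sum.inr o) (Sum.inl m) := by
    intro o
    have ho : o ∈ ⋃ i, P i := hcover ▸ Set.mem_univ o
    obtain ⟨i, hi⟩ := Set.mem_iUnion.mp ho
    obtain ⟨h, hinj, hadj⟩ := hmatch i
    exact ⟨(h ⟨o, hi⟩).1, hadj ⟨o, hi⟩⟩
  choose f hf using hadjO
  obtain ⟨e⟩ : Nonempty (O ≃ Fin (Fintype.card O)) := ⟨Fintype.equivFin O⟩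
  set rank : O → ℕ := fun o =>
    (Finset.univ.filter fun o' => f o' = f o ∧ e o' < e o).card with hrank
  have hrank_lt : ∀ o, rank o < d := by
    intro o
    have hsub : (Finset.univ.filter fun o' => f o' = f o ∧ e o' < e o) ⊂
        (Finset.univ.filter fun o' : O => adj (Sum.inr o') (Sum.inl (f o))) := by
      constructor
      · intro x hx
        simp only [Finset.mem_filter, Finset.mem_univ, true_and] at hx ⊢
        exact hx.1 ▸ hf x
      · intro hcon
        have := hcon (by simp [hf o] : o ∈ _)
        simp at this
    calc rank o < (Finset.univ.filter fun o' : O => adj (Sum.inr o') (Sum.inl (f o))).card :=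
          Finset.card_lt_card hsub
      _ ≤ d := hd ▸ Finset.le_sup (f := fun m : M => (Finset.univ.filter fun o : O => adj (Sum.inr o) (Sum.inl m)).card) (Finset.mem_univ (f o))
  have hrank_inj : ∀ o o' : O, f o = f o' → rank o = rank o' → o = o' := by
    intro o o' hfo hro
    by_contra hne
    have key : ∀ a b : O, f a = f b → e a < e b → rank a < rank b := by
      intro a b hab hlt
      apply Finset.card_lt_card
      constructor
      · intro x hx
        simp only [Finset.mem_filter, Finset.mem_univ, true_and] at hx ⊢
        exact ⟨hx.1.trans hab, hx.2.trans hlt⟩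
      · intro hcon
        have := hcon (by simp [hab, hlt] : a ∈ _)
        simp at this
    rcases lt_trichotomy (e o) (e o') with h | h | h
    · exact absurd hro (Nat.ne_of_lt (key o o' hfo h))
    · exact hne (e.injective (by exact_mod_cast h))
    · exact absurd hro.symm (Nat.ne_of_lt (key o' o hfo.symm h))
  refine ⟨fun i => {o | rank o / 2 = i.val}, ?_, ?_, ?_⟩
  · intro i j hij
    rw [Set.disjoint_left]
    intro o hi hj
    exact hij (Fin.ext (hi.symm.trans hj))
  · ext o
    simp only [Set.mem_iUnion, Set.mem_univ, iff_true]
    have := hrank_lt o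
    exact ⟨⟨rank o / 2, by omega⟩, rfl⟩
  · intro j
    refine ⟨fun o => (f o.1, ⟨rank o.1 % 2, by omega⟩), ?_, fun o => hf o.1⟩
    intro a b hab
    have h1 : f a.1 = f b.1 := congrArg Prod.fst hab
    have h2 : rank a.1 % 2 = rank b.1 % 2 := by
      have := congrArg Prod.snd hab
      simpa using congrArg Fin.val this
    have h3 : rank a.1 / 2 = rank b.1 / 2 := a.2.trans b.2.symm
    exact Subtype.ext (hrank_inj a.1 b.1 h1 (by omega))
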